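/- The Fixed^{0,1} and Fixed^{0,−1} mechanisms achieve their Egalitarian guarantees also for the Utilitarian and Happiness objectives: (a) for preferences in {0,1}^k and y* = (ℓ/2, …, ℓ/2), every agent satisfies u(x, t, y*) ≥ (1/2) · sup_{y∈[0,ℓ]^k} u(x, t, y), and hence for every profile of n ≥ 1 agents, Σ_i u(x_i, t_i, y*) ≥ (1/2) · sup_{y} Σ_i u(x_i, t_i, y) and min_i u(x_i, t_i, y*)/u_i* ≥ (1/2) · sup_{y} min_i u(x_i, t_i, y)/u_i*; (b) for preferences in {−1,0}^k and y** placing facilities 1, …, ⌈k/2⌉ at 0 and the rest at ℓ, every agent satisfies u(x, t, y**) ≥ (⌊k/2⌋/k) · sup_{y∈[0,ℓ]^k} u(x, t, y), and hence for every profile, Σ_i u(x_i, t_i, y**) ≥ (⌊k/2⌋/k) · sup_{y} Σ_i u(x_i, t_i, y) and min_i u(x_i, t_i, y**)/u_i* ≥ (⌊k/2⌋/k) · sup_{y} min_i u(x_i, t_i, y)/u_i*. Here u_i* = sup_{y∈[0,ℓ]^k} u(x_i, t_i, y), which satisfies u_i* ≥ ℓ > 0. -/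

import Mathlib

/-- Total utility of an agent at `x ∈ [0,ℓ]` with preference vector `t` for `k`
facilities placed at `y`: facility `j` contributes the distance if `t j = -1`,
the constant `ℓ` if `t j = 0`, and `ℓ` minus the distance if `t j = 1`. -/
noncomputable def uk (ℓ : ℝ) {k : ℕ} (x : ℝ) (t : Fin k → ℤ) (y : Fin k → ℝ) : ℝ :=
  ∑ j, (if t j = -1 then |x - y j| else if t j = 0 then ℓ else ℓ - |x - y j|)

/-- Admissible placements of the `k` facilities: `[0,ℓ]^k`. -/
def boxk (ℓ : ℝ) (k : ℕ) : Set (Fin k → ℝ) := {y | ∀ j, 0 ≤ y j ∧ y j ≤ ℓ}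

section Aux

variable {ℓ : ℝ} {k : ℕ}

lemma uk_nonneg (hℓ : 0 ≤ ℓ) {x : ℝ} (hx : x ∈ Set.Icc 0 ℓ) (t : Fin k → ℤ)
    {y : Fin k → ℝ} (hy : y ∈ boxk ℓ k) : 0 ≤ uk ℓ x t y := by
  apply Finset.sum_nonneg
  intro j _
  have h1 := (hy j).1
  have h2 := (hy j).2
  have habs : |x - y j| ≤ ℓ := abs_le.2 ⟨by linarith [hx.1, hx.2], by linarith [hx.1, hx.2]⟩
  split_ifs
  · exact abs_nonneg _
  · exact hℓ
  · linarith

lemma uk_le (hℓ : 0 ≤ ℓ) {x : ℝ} (hx : x ∈ Set.Icc 0 ℓ) (t : Fin k → ℤ)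
    {y : Fin k → ℝ} (hy : y ∈ boxk ℓ k) : uk ℓ x t y ≤ (k : ℝ) * ℓ := by
  have : uk ℓ x t y ≤ ∑ _j : Fin k, ℓ := by
    apply Finset.sum_le_sum
    intro j _
    have h1 := (hy j).1
    have h2 := (hy j).2
    have habs : |x - y j| ≤ ℓ := abs_le.2 ⟨by linarith [hx.1, hx.2], by linarith [hx.1, hx.2]⟩
    have habs0 : 0 ≤ |x - y j| := abs_nonneg _
    split_ifs <;> linarith
  simpa using this

lemma sup_uk_le (hℓ : 0 ≤ ℓ) {x : ℝ} (hx : x ∈ Set.Icc 0 ℓ) (t : Fin k → ℤ) :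
    (⨆ y ∈ boxk ℓ k, uk ℓ x t y) ≤ (k : ℝ) * ℓ := by
  refine Real.iSup_le (fun y => Real.iSup_le (fun hy => uk_le hℓ hx t hy) ?_) ?_ <;>
    exact mul_nonneg (Nat.cast_nonneg _) hℓ

lemma uk_le_sup (hℓ : 0 ≤ ℓ) {x : ℝ} (hx : x ∈ Set.Icc 0 ℓ) (t : Fin k → ℤ)
    {y0 : Fin k → ℝ} (hy0 : y0 ∈ boxk ℓ k) :
    uk ℓ x t y0 ≤ ⨆ y ∈ boxk ℓ k, uk ℓ x t y := by
  have hb : BddAbove (Set.range fun y => ⨆ _ : y ∈ boxk ℓ k, uk ℓ x t y) := by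
    refine ⟨(k : ℝ) * ℓ, ?_⟩
    rintro v ⟨y, rfl⟩
    exact Real.iSup_le (fun hy => uk_le hℓ hx t hy) (mul_nonneg (Nat.cast_nonneg _) hℓ)
  have h := le_ciSup hb y0
  rwa [ciSup_pos hy0] at h

lemma mul_biSup_le {ι : Type*} {S : Set ι} {f : ι → ℝ} {ρ C : ℝ} (hρ : 0 ≤ ρ) (hC : 0 ≤ C)
    (h : ∀ y ∈ S, ρ * f y ≤ C) : ρ * (⨆ y ∈ S, f y) ≤ C := by
  rcases eq_or_lt_of_le hρ with h0 | h0
  · simpa [← h0] using hC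
  · rw [mul_comm, ← le_div_iff₀ h0]
    refine Real.iSup_le (fun y => Real.iSup_le (fun hy => ?_) ?_) ?_
    · rw [le_div_iff₀ h0, mul_comm]
      exact h y hy
    · positivity
    · positivity

/-- Master lemma: from a per-agent guarantee `ρ·kℓ ≤ uk(·,·,yfix)` plus positivity of the
per-agent optimum, all three conclusions follow. -/
lemma master (hℓ : 0 < ℓ) (ρ : ℝ) (hρ : 0 ≤ ρ)
    (valid : (Fin k → ℤ) → Prop)
    (yfix : Fin k → ℝ) (hyfix : yfix ∈ boxk ℓ k)
    (hper : ∀ x ∈ Set.Icc 0 ℓ, ∀ t, valid t → ρ * ((k : ℝ) * ℓ) ≤ uk ℓ x t yfix)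
    (hstar : ∀ x ∈ Set.Icc 0 ℓ, ∀ t, valid t → 0 < ⨆ y ∈ boxk ℓ k, uk ℓ x t y) :
    (∀ x ∈ Set.Icc 0 ℓ, ∀ t, valid t →
      ρ * (⨆ y ∈ boxk ℓ k, uk ℓ x t y) ≤ uk ℓ x t yfix) ∧
    (∀ n : ℕ, 0 < n → ∀ x : Fin n → ℝ, ∀ t : Fin n → Fin k → ℤ,
      (∀ i, x i ∈ Set.Icc 0 ℓ) → (∀ i, valid (t i)) →
      ρ * (⨆ y ∈ boxk ℓ k, ∑ i, uk ℓ (x i) (t i) y) ≤ ∑ i, uk ℓ (x i) (t i) yfix) ∧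
    (∀ n : ℕ, 0 < n → ∀ x : Fin n → ℝ, ∀ t : Fin n → Fin k → ℤ,
      (∀ i, x i ∈ Set.Icc 0 ℓ) → (∀ i, valid (t i)) →
      ρ * (⨆ y ∈ boxk ℓ k, ⨅ i,
          uk ℓ (x i) (t i) y / (⨆ y' ∈ boxk ℓ k, uk ℓ (x i) (t i) y')) ≤
        ⨅ i, uk ℓ (x i) (t i) yfix / (⨆ y' ∈ boxk ℓ k, uk ℓ (x i) (t i) y')) := by
  have hagent : ∀ x ∈ Set.Icc 0 ℓ, ∀ t, valid t → ∀ y ∈ boxk ℓ k,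
      ρ * uk ℓ x t y ≤ uk ℓ x t yfix := by
    intro x hx t ht y hy
    calc ρ * uk ℓ x t y ≤ ρ * ((k : ℝ) * ℓ) :=
          mul_le_mul_of_nonneg_left (uk_le hℓ.le hx t hy) hρ
      _ ≤ uk ℓ x t yfix := hper x hx t ht
  refine ⟨?_, ?_, ?_⟩
  · -- per agent
    intro x hx t ht
    exact mul_biSup_le hρ (uk_nonneg hℓ.le hx t hyfix) (fun y hy => hagent x hx t ht y hy)
  · -- utilitarian
    intro n hn x t hx ht
    refine mul_biSup_le hρ ?_ ?_
    · exact Finset.sum_nonneg fun i _ => uk_nonneg hℓ.le (hx i) _ hyfix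
    · intro y hy
      rw [Finset.mul_sum]
      exact Finset.sum_le_sum fun i _ => hagent (x i) (hx i) (t i) (ht i) y hy
  · -- happiness
    intro n hn x t hx ht
    haveI : Nonempty (Fin n) := Fin.pos_iff_nonempty.mp hn
    have hpos : ∀ i, 0 < ⨆ y' ∈ boxk ℓ k, uk ℓ (x i) (t i) y' :=
      fun i => hstar _ (hx i) _ (ht i)
    refine mul_biSup_le hρ ?_ ?_
    · exact le_ciInf fun i => div_nonneg (uk_nonneg hℓ.le (hx i) _ hyfix) (hpos i).le
    · intro y hy
      refine le_ciInf fun i => ?_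
      have hbdd : BddBelow (Set.range fun j =>
          uk ℓ (x j) (t j) y / (⨆ y' ∈ boxk ℓ k, uk ℓ (x j) (t j) y')) := by
        refine ⟨0, ?_⟩
        rintro v ⟨j, rfl⟩
        exact div_nonneg (uk_nonneg hℓ.le (hx j) _ hy) (hpos j).le
      calc ρ * ⨅ j, uk ℓ (x j) (t j) y / (⨆ y' ∈ boxk ℓ k, uk ℓ (x j) (t j) y')
          ≤ ρ * (uk ℓ (x i) (t i) y / (⨆ y' ∈ boxk ℓ k, uk ℓ (x i) (t i) y')) :=
            mul_le_mul_of_nonneg_left (ciInf_le hbdd i) hρ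
        _ = (ρ * uk ℓ (x i) (t i) y) / (⨆ y' ∈ boxk ℓ k, uk ℓ (x i) (t i) y') :=
            (mul_div_assoc _ _ _).symm
        _ ≤ uk ℓ (x i) (t i) yfix / (⨆ y' ∈ boxk ℓ k, uk ℓ (x i) (t i) y') := by
            have := hagent (x i) (hx i) (t i) (ht i) y hy
            gcongr
            exact (hpos i).le

/-- Per-agent bound for `Fixed^{0,1}`. -/
lemma ukA_fixed (hℓ : 0 < ℓ) {x : ℝ} (hx : x ∈ Set.Icc 0 ℓ) {t : Fin k → ℤ}
    (ht : ∀ j, t j = 0 ∨ t j = 1) :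
    (k : ℝ) * (ℓ / 2) ≤ uk ℓ x t (fun _ => ℓ / 2) := by
  have : (∑ _j : Fin k, ℓ / 2) ≤ uk ℓ x t (fun _ => ℓ / 2) := by
    apply Finset.sum_le_sum
    intro j _
    have habs : |x - ℓ / 2| ≤ ℓ / 2 :=
      abs_le.2 ⟨by linarith [hx.1, hx.2], by linarith [hx.1, hx.2]⟩
    rcases ht j with h | h <;> simp [h] <;> linarith
  simpa using this

/-- Per-agent bound for `Fixed^{0,-1}`. -/
lemma ukB_fixed (hℓ : 0 < ℓ) (hk : 0 < k) {x : ℝ} (hx : x ∈ Set.Icc 0 ℓ)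
    {t : Fin k → ℤ} (ht : ∀ j, t j = -1 ∨ t j = 0) :
    ((k / 2 : ℕ) : ℝ) * ℓ ≤ uk ℓ x t (fun j => if (j : ℕ) < (k + 1) / 2 then 0 else ℓ) := by
  set c := (k + 1) / 2 with hc
  have hck : c ≤ k := by omega
  have hterm : (∑ j : Fin k, if (j : ℕ) < c then x else ℓ - x) ≤
      uk ℓ x t (fun j => if (j : ℕ) < c then 0 else ℓ) := by
    apply Finset.sum_le_sum
    intro j _
    rcases ht j with h | h <;> by_cases hj : (j : ℕ) < c <;>
      simp [h, hj, abs_of_nonneg hx.1, abs_of_nonpos (by linarith [hx.2] : x - ℓ ≤ 0)] <;>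
      linarith [hx.1, hx.2]
  have hsum : (∑ j : Fin k, if (j : ℕ) < c then x else ℓ - x) =
      (c : ℝ) * x + ((k - c : ℕ) : ℝ) * (ℓ - x) := by
    rw [Fin.sum_univ_eq_sum_range (fun j => if j < c then x else ℓ - x) k]
    rw [Finset.range_eq_Ico, ← Finset.sum_Ico_consecutive _ (Nat.zero_le c) hck]
    rw [Finset.sum_congr rfl (fun j hj => if_pos (Finset.mem_Ico.mp hj).2),
      Finset.sum_congr rfl (g := fun _ => ℓ - x)
        (fun j hj => if_neg (by exact Nat.not_lt.mpr (Finset.mem_Ico.mp hj).1))]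
    simp [Nat.card_Ico]
    ring
  have h2c : k ≤ 2 * c := by omega
  have hkc : k / 2 = k - c := by omega
  rw [hkc] at *
  have hcast : ((k - c : ℕ) : ℝ) ≤ (c : ℕ) := by
    have : (k - c : ℕ) ≤ c := by omega
    exact_mod_cast this
  calc ((k - c : ℕ) : ℝ) * ℓ ≤ (c : ℝ) * x + ((k - c : ℕ) : ℝ) * (ℓ - x) := by
        nlinarith [hx.1, hx.2]
    _ ≤ uk ℓ x t (fun j => if (j : ℕ) < c then 0 else ℓ) := by rw [← hsum]; exact hterm

/-- Positivity of the per-agent optimum for preferences in `{-1,0}`. -/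
lemma ukB_star (hℓ : 0 < ℓ) (hk : 0 < k) {x : ℝ} (hx : x ∈ Set.Icc 0 ℓ)
    {t : Fin k → ℤ} (ht : ∀ j, t j = -1 ∨ t j = 0) :
    0 < ⨆ y ∈ boxk ℓ k, uk ℓ x t y := by
  set y0 : Fin k → ℝ := fun _ => if x ≤ ℓ / 2 then ℓ else 0 with hy0def
  have hy0 : y0 ∈ boxk ℓ k := by
    intro j
    simp only [hy0def]
    split_ifs <;> constructor <;> linarith
  have hlb : (k : ℝ) * (ℓ / 2) ≤ uk ℓ x t y0 := by
    have : (∑ _j : Fin k, ℓ / 2) ≤ uk ℓ x t y0 := by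
      apply Finset.sum_le_sum
      intro j _
      rcases ht j with h | h <;> by_cases hxl : x ≤ ℓ / 2 <;>
        simp [h, hy0def, hxl, abs_of_nonneg hx.1,
          abs_of_nonpos (by linarith [hx.2] : x - ℓ ≤ 0)] <;>
        linarith [hx.1, hx.2]
    simpa using this
  have hpos : (0 : ℝ) < (k : ℝ) * (ℓ / 2) := by positivity
  exact lt_of_lt_of_le hpos (le_trans hlb (uk_le_sup hℓ.le hx t hy0))

end Aux

/-- `Fixed^{0,1}` (every facility at `ℓ/2`, for preferences in
`{0,1}^k`) and `Fixed^{0,-1}` (`⌈k/2⌉` facilities at `0` and `⌊k/2⌋` at `ℓ`,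
for preferences in `{-1,0}^k`) achieve their Egalitarian guarantees (`1/2`,
resp. `⌊k/2⌋/k`) also per agent, and hence for the Utilitarian and the
Happiness objectives. -/
theorem fixed01_fixed0m1_utilitarian_happiness_approx
    (ℓ : ℝ) (hℓ : 0 < ℓ) (k : ℕ) (hk : 0 < k) :
    -- (a) Fixed^{0,1}: per-agent guarantee
    ((∀ x ∈ Set.Icc 0 ℓ, ∀ t : Fin k → ℤ, (∀ j, t j = 0 ∨ t j = 1) →
      (1/2) * (⨆ y ∈ boxk ℓ k, uk ℓ x t y) ≤ uk ℓ x t (fun _ => ℓ / 2)) ∧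
    -- (a) Utilitarian
    (∀ n : ℕ, 0 < n → ∀ x : Fin n → ℝ, ∀ t : Fin n → Fin k → ℤ,
      (∀ i, x i ∈ Set.Icc 0 ℓ) → (∀ i j, t i j = 0 ∨ t i j = 1) →
      (1/2) * (⨆ y ∈ boxk ℓ k, ∑ i, uk ℓ (x i) (t i) y) ≤
        ∑ i, uk ℓ (x i) (t i) (fun _ => ℓ / 2)) ∧
    -- (a) Happiness
    (∀ n : ℕ, 0 < n → ∀ x : Fin n → ℝ, ∀ t : Fin n → Fin k → ℤ,
      (∀ i, x i ∈ Set.Icc 0 ℓ) → (∀ i j, t i j = 0 ∨ t i j = 1) →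
      (1/2) * (⨆ y ∈ boxk ℓ k, ⨅ i,
          uk ℓ (x i) (t i) y / (⨆ y' ∈ boxk ℓ k, uk ℓ (x i) (t i) y')) ≤
        ⨅ i, uk ℓ (x i) (t i) (fun _ => ℓ / 2) /
            (⨆ y' ∈ boxk ℓ k, uk ℓ (x i) (t i) y'))) ∧
    -- (b) Fixed^{0,-1}: per-agent guarantee
    ((∀ x ∈ Set.Icc 0 ℓ, ∀ t : Fin k → ℤ, (∀ j, t j = -1 ∨ t j = 0) →
      (((k / 2 : ℕ) : ℝ) / (k : ℝ)) * (⨆ y ∈ boxk ℓ k, uk ℓ x t y) ≤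
        uk ℓ x t (fun j => if (j : ℕ) < (k + 1) / 2 then 0 else ℓ)) ∧
    -- (b) Utilitarian
    (∀ n : ℕ, 0 < n → ∀ x : Fin n → ℝ, ∀ t : Fin n → Fin k → ℤ,
      (∀ i, x i ∈ Set.Icc 0 ℓ) → (∀ i j, t i j = -1 ∨ t i j = 0) →
      (((k / 2 : ℕ) : ℝ) / (k : ℝ)) * (⨆ y ∈ boxk ℓ k, ∑ i, uk ℓ (x i) (t i) y) ≤
        ∑ i, uk ℓ (x i) (t i) (fun j => if (j : ℕ) < (k + 1) / 2 then 0 else ℓ)) ∧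
    -- (b) Happiness
    (∀ n : ℕ, 0 < n → ∀ x : Fin n → ℝ, ∀ t : Fin n → Fin k → ℤ,
      (∀ i, x i ∈ Set.Icc 0 ℓ) → (∀ i j, t i j = -1 ∨ t i j = 0) →
      (((k / 2 : ℕ) : ℝ) / (k : ℝ)) * (⨆ y ∈ boxk ℓ k, ⨅ i,
          uk ℓ (x i) (t i) y / (⨆ y' ∈ boxk ℓ k, uk ℓ (x i) (t i) y')) ≤
        ⨅ i, uk ℓ (x i) (t i) (fun j => if (j : ℕ) < (k + 1) / 2 then 0 else ℓ) /
            (⨆ y' ∈ boxk ℓ k, uk ℓ (x i) (t i) y'))) := by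
  have hyA : (fun _ : Fin k => ℓ / 2) ∈ boxk ℓ k := fun j => ⟨by linarith, by linarith⟩
  have hyB : (fun j : Fin k => if (j : ℕ) < (k + 1) / 2 then (0 : ℝ) else ℓ) ∈ boxk ℓ k := by
    intro j
    dsimp only
    split_ifs <;> exact ⟨by linarith, by linarith⟩
  have hperA : ∀ x ∈ Set.Icc 0 ℓ, ∀ t : Fin k → ℤ, (∀ j, t j = 0 ∨ t j = 1) →
      (1/2 : ℝ) * ((k : ℝ) * ℓ) ≤ uk ℓ x t (fun _ => ℓ / 2) := by
    intro x hx t ht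
    have := ukA_fixed hℓ hx ht
    linarith
  have hstarA : ∀ x ∈ Set.Icc 0 ℓ, ∀ t : Fin k → ℤ, (∀ j, t j = 0 ∨ t j = 1) →
      0 < ⨆ y ∈ boxk ℓ k, uk ℓ x t y := by
    intro x hx t ht
    have h1 := ukA_fixed (t := t) hℓ hx ht
    have h2 := uk_le_sup hℓ.le hx t hyA
    have : (0 : ℝ) < (k : ℝ) * (ℓ / 2) := by positivity
    linarith
  have hperB : ∀ x ∈ Set.Icc 0 ℓ, ∀ t : Fin k → ℤ, (∀ j, t j = -1 ∨ t j = 0) →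
      (((k / 2 : ℕ) : ℝ) / (k : ℝ)) * ((k : ℝ) * ℓ) ≤
        uk ℓ x t (fun j => if (j : ℕ) < (k + 1) / 2 then 0 else ℓ) := by
    intro x hx t ht
    have hkne : (k : ℝ) ≠ 0 := Nat.cast_ne_zero.mpr hk.ne'
    have heq : (((k / 2 : ℕ) : ℝ) / (k : ℝ)) * ((k : ℝ) * ℓ) = ((k / 2 : ℕ) : ℝ) * ℓ := by
      field_simp
    rw [heq]
    exact ukB_fixed hℓ hk hx ht
  have hρB : (0 : ℝ) ≤ ((k / 2 : ℕ) : ℝ) / (k : ℝ) :=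
    div_nonneg (Nat.cast_nonneg _) (Nat.cast_nonneg _)
  obtain ⟨A1, A2, A3⟩ := master hℓ (1/2) (by norm_num)
    (fun t => ∀ j, t j = 0 ∨ t j = 1) (fun _ => ℓ / 2) hyA hperA hstarA
  obtain ⟨B1, B2, B3⟩ := master hℓ (((k / 2 : ℕ) : ℝ) / (k : ℝ)) hρB
    (fun t => ∀ j, t j = -1 ∨ t j = 0)
    (fun j => if (j : ℕ) < (k + 1) / 2 then 0 else ℓ) hyB hperB
    (fun x hx t ht => ukB_star hℓ hk hx ht)
  exact ⟨⟨A1, fun n hn x t hx ht => A2 n hn x t hx (fun i j => ht i j),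
      fun n hn x t hx ht => A3 n hn x t hx (fun i j => ht i j)⟩,
    ⟨B1, fun n hn x t hx ht => B2 n hn x t hx (fun i j => ht i j),
      fun n hn x t hx ht => B3 n hn x t hx (fun i j => ht i j)⟩⟩
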